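/- arXiv:2012.10406 — 2 statements merged into one kernel-verified Lean document; each statement's English description precedes it below -/
import Mathlib

section
/- Let H be a real Hilbert space, K ⊆ H a self-dual cone, B̃ a bounded linear operator on H such that the map x ↦ B̃x is quasi-monotone with respect to K, and b̃ ∈ K. Then for every x ∈ K and every t ≥ 0, the mild solution of the affine ODE dx_t = (b̃ + B̃ x_t) dt, x₀ = x, namely x_t = e^{tB̃} x + ∫₀ᵗ e^{(t−s)B̃} b̃ ds, satisfies x_t ∈ K. -/
open scoped RealInnerProductSpace

def IsSelfDualCone {H : Type*} [NormedAddCommGroup H] [InnerProductSpace ℝ H]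
    (K : Set H) : Prop :=
  K = {x : H | ∀ y ∈ K, 0 ≤ ⟪x, y⟫}

namespace Stmt17Aux

open Filter NormedSpace

variable {H : Type*} [NormedAddCommGroup H] [InnerProductSpace ℝ H] [CompleteSpace H]
  {K : Set H}

lemma mem_iff (hK : IsSelfDualCone K) {x : H} : x ∈ K ↔ ∀ y ∈ K, 0 ≤ ⟪x, y⟫ := by
  nth_rewrite 1 [hK]; exact Iff.rfl

lemma zero_mem (hK : IsSelfDualCone K) : (0 : H) ∈ K :=
  (mem_iff hK).2 fun y _ => by simp

lemma convex (hK : IsSelfDualCone K) : Convex ℝ K := by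
  intro a ha b hb p q hp hq _
  refine (mem_iff hK).2 fun y hy => ?_
  have ha' := (mem_iff hK).1 ha y hy
  have hb' := (mem_iff hK).1 hb y hy
  rw [inner_add_left, real_inner_smul_left, real_inner_smul_left]
  exact add_nonneg (mul_nonneg hp ha') (mul_nonneg hq hb')

lemma isClosed (hK : IsSelfDualCone K) : IsClosed K := by
  have h : K = ⋂ y ∈ K, {x : H | 0 ≤ ⟪x, y⟫} := by
    ext z
    simp only [Set.mem_iInter, Set.mem_setOf_eq]
    exact mem_iff hK
  rw [h]
  exact isClosed_biInter fun y _ =>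
    isClosed_le continuous_const (continuous_id.inner continuous_const)

lemma smul_mem (hK : IsSelfDualCone K) {c : ℝ} (hc : 0 ≤ c) {v : H} (hv : v ∈ K) :
    c • v ∈ K :=
  (mem_iff hK).2 fun y hy => by
    rw [real_inner_smul_left]
    exact mul_nonneg hc ((mem_iff hK).1 hv y hy)

lemma proj (hK : IsSelfDualCone K) (u : H) :
    ∃ p ∈ K, ⟪u - p, p⟫ = 0 ∧ ∀ w ∈ K, ⟪u - p, w⟫ ≤ 0 := by
  obtain ⟨p, hp, hmin⟩ := exists_norm_eq_iInf_of_complete_convex ⟨0, zero_mem hK⟩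
    (isClosed hK).isComplete (convex hK) u
  rw [norm_eq_iInf_iff_real_inner_le_zero (convex hK) hp] at hmin
  have h2 : ⟪u - p, p⟫ ≤ 0 := by
    have h := hmin ((2 : ℝ) • p) (smul_mem hK (by norm_num) hp)
    have e : (2 : ℝ) • p - p = p := by rw [two_smul]; abel
    rwa [e] at h
  have h0 : 0 ≤ ⟪u - p, p⟫ := by
    have h := hmin 0 (zero_mem hK)
    rw [zero_sub, inner_neg_right] at h
    linarith
  have horth : ⟪u - p, p⟫ = 0 := le_antisymm h2 h0
  refine ⟨p, hp, horth, fun w hw => ?_⟩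
  have h := hmin w hw
  rw [inner_sub_right, horth] at h
  linarith

lemma resolvent (hK : IsSelfDualCone K) (C : H →L[ℝ] H)
    (hq : ∀ v ∈ K, ∀ u ∈ K, ⟪v, u⟫ = 0 → 0 ≤ ⟪C v, u⟫)
    (hC : ‖C‖ ≤ 1 / 2) {y z : H} (hy : y ∈ K) (hz : z - C z = y) : z ∈ K := by
  obtain ⟨p, hp, horth, hneg⟩ := proj hK z
  set n := z - p with hn
  have hnK : -n ∈ K := (mem_iff hK).2 fun w hw => by
    rw [inner_neg_left]
    linarith [hneg w hw]
  have hpn : ⟪p, -n⟫ = 0 := by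
    rw [inner_neg_right, real_inner_comm, horth, neg_zero]
  have hq' : 0 ≤ ⟪C p, -n⟫ := hq p hp (-n) hnK hpn
  have hb : ⟪C n, n⟫ ≤ 1 / 2 * (‖n‖ * ‖n‖) := by
    calc ⟪C n, n⟫ ≤ ‖C n‖ * ‖n‖ := real_inner_le_norm _ _
      _ ≤ ‖C‖ * ‖n‖ * ‖n‖ :=
        mul_le_mul_of_nonneg_right (C.le_opNorm n) (norm_nonneg n)
      _ ≤ 1 / 2 * (‖n‖ * ‖n‖) := by nlinarith [norm_nonneg n, mul_nonneg (norm_nonneg n) (norm_nonneg n)]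
  have key : (0 : ℝ) ≤ ⟪y, -n⟫ := (mem_iff hK).1 hy (-n) hnK
  have hz2 : z = p + n := by rw [hn]; abel
  have expand : ⟪y, -n⟫ = ⟪p, -n⟫ + (-⟪n, n⟫) - (⟪C p, -n⟫ + (-⟪C n, n⟫)) := by
    rw [← hz, hz2, map_add, inner_sub_left, inner_add_left, inner_add_left]
    rw [inner_neg_right (x := n) (y := n), inner_neg_right (x := C n) (y := n)]
  have hself : ⟪n, n⟫ = ‖n‖ * ‖n‖ := real_inner_self_eq_norm_mul_norm n
  have hn0 : n = 0 := by
    have h1 : ‖n‖ * ‖n‖ ≤ 0 := by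
      rw [expand, hpn, hself] at key
      linarith
    have h2 : ‖n‖ = 0 := by nlinarith [norm_nonneg n]
    exact norm_eq_zero.1 h2
  rw [hz2, hn0, add_zero]
  exact hp

end Stmt17Aux

namespace Stmt17Op

open Filter Topology NormedSpace
open scoped Nat

variable {H : Type*} [NormedAddCommGroup H] [InnerProductSpace ℝ H] [CompleteSpace H]

lemma norm_pow_le (T : H →L[ℝ] H) : ∀ m : ℕ, ‖T ^ m‖ ≤ ‖T‖ ^ m
  | 0 => by
    rw [pow_zero, pow_zero, ContinuousLinearMap.one_def]
    exact ContinuousLinearMap.norm_id_le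
  | (m + 1) => by
    rw [pow_succ, pow_succ]
    exact le_trans (norm_mul_le _ _)
      (mul_le_mul_of_nonneg_right (norm_pow_le T m) (norm_nonneg T))

lemma inv_bound {A : H →L[ℝ] H} (hA : ‖A‖ ≤ 1 / 2) :
    ‖Ring.inverse (1 - A)‖ ≤ 2 := by
  have h1 : ‖A‖ < 1 := by linarith
  have h := NormedRing.inverse_one_sub_nth_order' 1 h1
  rw [Finset.sum_range_one, pow_zero, pow_one] at h
  have hb : ‖Ring.inverse (1 - A)‖ ≤ 1 + ‖A‖ * ‖Ring.inverse (1 - A)‖ := by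
    conv_lhs => rw [h]
    refine le_trans (norm_add_le _ _) ?_
    gcongr
    · rw [ContinuousLinearMap.one_def]; exact ContinuousLinearMap.norm_id_le
    · exact norm_mul_le _ _
  nlinarith [norm_nonneg (Ring.inverse (1 - A)), norm_nonneg A]

lemma inv_tail {A : H →L[ℝ] H} (hA : ‖A‖ ≤ 1 / 2) :
    ‖Ring.inverse (1 - A) - 1 - A‖ ≤ 2 * ‖A‖ ^ 2 := by
  have h1 : ‖A‖ < 1 := by linarith
  have h := NormedRing.inverse_one_sub_nth_order' 2 h1
  have hs : (∑ i ∈ Finset.range 2, A ^ i) = 1 + A := by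
    rw [Finset.sum_range_succ, Finset.sum_range_one, pow_zero, pow_one]
  rw [hs] at h
  rw [h]
  have he : 1 + A + A ^ 2 * Ring.inverse (1 - A) - 1 - A = A ^ 2 * Ring.inverse (1 - A) := by
    abel
  rw [he]
  calc ‖A ^ 2 * Ring.inverse (1 - A)‖ ≤ ‖A ^ 2‖ * ‖Ring.inverse (1 - A)‖ := norm_mul_le _ _
    _ ≤ ‖A‖ ^ 2 * 2 :=
      mul_le_mul (norm_pow_le A 2) (inv_bound hA) (norm_nonneg _) (by positivity)
    _ = 2 * ‖A‖ ^ 2 := by ring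

lemma exp_tail {A : H →L[ℝ] H} (hA : ‖A‖ ≤ 1 / 2) :
    ‖exp A - 1 - A‖ ≤ 2 * ‖A‖ ^ 2 := by
  have hsum : Summable fun n : ℕ => ((n !⁻¹ : ℝ)) • A ^ n := expSeries_summable' A
  have hterm : ∀ n : ℕ, ‖(((n + 2)! : ℝ)⁻¹) • A ^ (n + 2)‖ ≤ ‖A‖ ^ 2 * (1 / 2) ^ n := by
    intro n
    have hns := norm_smul (α := ℝ) ((((n + 2)! : ℝ))⁻¹) (A ^ (n + 2))
    rw [hns]
    have h1 : ‖(((n + 2)! : ℝ)⁻¹)‖ ≤ 1 := by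
      rw [Real.norm_eq_abs, abs_of_nonneg (by positivity)]
      rw [inv_le_one_iff₀]
      right
      exact_mod_cast Nat.one_le_iff_ne_zero.2 (Nat.factorial_ne_zero _)
    have h2 : ‖A ^ (n + 2)‖ ≤ ‖A‖ ^ 2 * (1 / 2) ^ n := by
      calc ‖A ^ (n + 2)‖ ≤ ‖A‖ ^ (n + 2) := norm_pow_le A _
        _ = ‖A‖ ^ 2 * ‖A‖ ^ n := by ring
        _ ≤ ‖A‖ ^ 2 * (1 / 2) ^ n := by
          gcongr
    calc ‖(((n + 2)! : ℝ)⁻¹)‖ * ‖A ^ (n + 2)‖ ≤ 1 * (‖A‖ ^ 2 * (1 / 2) ^ n) :=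
        mul_le_mul h1 h2 (norm_nonneg _) one_pos.le
      _ = ‖A‖ ^ 2 * (1 / 2) ^ n := one_mul _
  have hgeom : Summable fun n : ℕ => ‖A‖ ^ 2 * (1 / 2 : ℝ) ^ n :=
    (summable_geometric_of_lt_one (by norm_num) (by norm_num)).mul_left _
  have hsn : Summable fun n : ℕ => ‖(((n + 2)! : ℝ)⁻¹) • A ^ (n + 2)‖ :=
    Summable.of_nonneg_of_le (fun n => norm_nonneg _) hterm hgeom
  have hrw : exp A - 1 - A = ∑' n : ℕ, (((n + 2)! : ℝ)⁻¹) • A ^ (n + 2) := by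
    have := (Summable.sum_add_tsum_nat_add 2 hsum).symm
    rw [exp_eq_tsum ℝ]
    simp only []
    rw [this]
    have hs : (∑ i ∈ Finset.range 2, ((i !⁻¹ : ℝ)) • A ^ i) = 1 + A := by
      rw [Finset.sum_range_succ, Finset.sum_range_one]
      norm_num
    rw [hs]
    abel
  rw [hrw]
  calc ‖∑' n : ℕ, (((n + 2)! : ℝ)⁻¹) • A ^ (n + 2)‖
      ≤ ∑' n : ℕ, ‖(((n + 2)! : ℝ)⁻¹) • A ^ (n + 2)‖ := norm_tsum_le_tsum_norm hsn
    _ ≤ ∑' n : ℕ, ‖A‖ ^ 2 * (1 / 2 : ℝ) ^ n := Summable.tsum_le_tsum hterm hsn hgeom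
    _ = ‖A‖ ^ 2 * ∑' n : ℕ, (1 / 2 : ℝ) ^ n := tsum_mul_left
    _ = ‖A‖ ^ 2 * 2 := by
        rw [tsum_geometric_of_lt_one (by norm_num) (by norm_num)]
        norm_num
    _ = 2 * ‖A‖ ^ 2 := by ring

lemma pow_sub_pow {p q : H →L[ℝ] H} {M : ℝ} (hM : 1 ≤ M) (hp : ‖p‖ ≤ M) (hq : ‖q‖ ≤ M) :
    ∀ m : ℕ, ‖p ^ m - q ^ m‖ ≤ m * M ^ m * ‖p - q‖
  | 0 => by simp
  | (m + 1) => by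
    have key : p ^ (m + 1) - q ^ (m + 1) = p ^ m * (p - q) + (p ^ m - q ^ m) * q := by
      rw [pow_succ, pow_succ]
      noncomm_ring
    rw [key]
    have hpm : ‖p ^ m‖ ≤ M ^ m :=
      (norm_pow_le p m).trans (pow_le_pow_left₀ (norm_nonneg p) hp m)
    have h1 : ‖p ^ m * (p - q)‖ ≤ M ^ m * ‖p - q‖ :=
      le_trans (norm_mul_le _ _) (mul_le_mul_of_nonneg_right hpm (norm_nonneg _))
    have h2 : ‖(p ^ m - q ^ m) * q‖ ≤ m * M ^ m * ‖p - q‖ * M :=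
      le_trans (norm_mul_le _ _)
        (mul_le_mul (pow_sub_pow hM hp hq m) hq (norm_nonneg _) (by positivity))
    refine le_trans (norm_add_le _ _) ?_
    have hMnn : (0:ℝ) ≤ M ^ m := by positivity
    rw [pow_succ]
    push_cast
    nlinarith [mul_nonneg (mul_nonneg hMnn (norm_nonneg (p - q))) (sub_nonneg.2 hM)]

lemma approx_est (B : H →L[ℝ] H) {s : ℝ} (hs : 0 ≤ s) {m : ℕ}
    (hm1 : ‖(s / m) • B‖ ≤ 1 / 2) (hm2 : 1 ≤ m) :
    ‖(Ring.inverse (1 - (s / m) • B)) ^ m - exp (s • B)‖ ≤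
      4 * (s * ‖B‖) ^ 2 * Real.exp (2 * (s * ‖B‖)) / m := by
  have hmne : (m : ℝ) ≠ 0 := Nat.cast_ne_zero.2 (by omega)
  have hmpos : (0 : ℝ) < m := by positivity
  set c := s * ‖B‖ with hc
  have hcnn : 0 ≤ c := mul_nonneg hs (norm_nonneg B)
  set A := (s / m) • B with hA
  have hd : 0 ≤ s / m := div_nonneg hs (Nat.cast_nonneg m)
  have hAc : ‖A‖ = c / m := by
    have hns := norm_smul (α := ℝ) (s / (m:ℝ)) B
    rw [hA, hns, Real.norm_eq_abs, abs_of_nonneg hd, hc]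
    ring
  have hAnn : 0 ≤ ‖A‖ := norm_nonneg A
  -- exp(s B) = (exp A)^m
  have hQn : exp (s • B) = (exp A) ^ m := by
    let +nondep : NormedAlgebra ℚ (H →L[ℝ] H) := .restrictScalars ℚ ℝ _
    rw [← exp_nsmul, hA, ← Nat.cast_smul_eq_nsmul ℝ, smul_smul]
    congr 1
    field_simp
  -- bound ‖inverse - 1 - A‖ etc.
  have hone : ‖(1 : H →L[ℝ] H)‖ ≤ 1 := by
    rw [ContinuousLinearMap.one_def]; exact ContinuousLinearMap.norm_id_le
  have hP1 : ‖Ring.inverse (1 - A)‖ ≤ 1 + 2 * ‖A‖ := by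
    have h := inv_tail hm1
    have hdec : Ring.inverse (1 - A) = (Ring.inverse (1 - A) - 1 - A) + 1 + A := by abel
    have : ‖Ring.inverse (1 - A)‖ ≤ ‖Ring.inverse (1 - A) - 1 - A‖ + ‖(1 : H →L[ℝ] H)‖ + ‖A‖ := by
      conv_lhs => rw [hdec]
      exact le_trans (norm_add_le _ _) (by gcongr; exact norm_add_le _ _)
    nlinarith
  have hQ1 : ‖exp A‖ ≤ 1 + 2 * ‖A‖ := by
    have h := exp_tail hm1
    have hdec : exp A = (exp A - 1 - A) + 1 + A := by abel
    have : ‖exp A‖ ≤ ‖exp A - 1 - A‖ + ‖(1 : H →L[ℝ] H)‖ + ‖A‖ := by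
      conv_lhs => rw [hdec]
      exact le_trans (norm_add_le _ _) (by gcongr; exact norm_add_le _ _)
    nlinarith
  have hPQ : ‖Ring.inverse (1 - A) - exp A‖ ≤ 4 * ‖A‖ ^ 2 := by
    have h1 := inv_tail hm1
    have h2 := exp_tail hm1
    have hdec : Ring.inverse (1 - A) - exp A
        = (Ring.inverse (1 - A) - 1 - A) - (exp A - 1 - A) := by abel
    rw [hdec]
    refine le_trans (norm_sub_le _ _) ?_
    linarith
  have htel := pow_sub_pow (M := 1 + 2 * ‖A‖) (by linarith) hP1 hQ1 m
  rw [hQn]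
  have hexp : (1 + 2 * ‖A‖) ^ m ≤ Real.exp (2 * c) := by
    have h1 : 1 + 2 * ‖A‖ ≤ Real.exp (2 * ‖A‖) := by
      have := Real.add_one_le_exp (2 * ‖A‖)
      linarith
    calc (1 + 2 * ‖A‖) ^ m ≤ (Real.exp (2 * ‖A‖)) ^ m :=
        pow_le_pow_left₀ (by linarith) h1 m
      _ = Real.exp (m * (2 * ‖A‖)) := by rw [← Real.exp_nat_mul]
      _ = Real.exp (2 * c) := by
          rw [hAc]
          congr 1
          field_simp
  calc ‖(Ring.inverse (1 - A)) ^ m - (exp A) ^ m‖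
      ≤ m * (1 + 2 * ‖A‖) ^ m * ‖Ring.inverse (1 - A) - exp A‖ := htel
    _ ≤ m * Real.exp (2 * c) * (4 * ‖A‖ ^ 2) := by
        have hm0 : (0:ℝ) ≤ m := Nat.cast_nonneg m
        have hpow0 : (0:ℝ) ≤ (1 + 2*‖A‖)^m := by positivity
        have := mul_le_mul (mul_le_mul_of_nonneg_left hexp hm0) hPQ (norm_nonneg _)
          (by positivity)
        exact this
    _ = 4 * c ^ 2 * Real.exp (2 * c) / m := by
        rw [hAc]
        field_simp

lemma exp_mem {K : Set H} (hK : IsSelfDualCone K) (B : H →L[ℝ] H)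
    (hquasi : ∀ v₁ v₂ : H, v₂ - v₁ ∈ K → ∀ u ∈ K, ⟪v₂ - v₁, u⟫ = 0 →
      0 ≤ ⟪B v₂ - B v₁, u⟫)
    {s : ℝ} (hs : 0 ≤ s) {x : H} (hx : x ∈ K) : exp (s • B) x ∈ K := by
  have hq : ∀ ε : ℝ, 0 ≤ ε → ∀ v ∈ K, ∀ u ∈ K, ⟪v, u⟫ = 0 → 0 ≤ ⟪(ε • B) v, u⟫ := by
    intro ε hε v hv u hu hvu
    have h0 := hquasi 0 v (by simpa using hv) u hu (by simpa using hvu)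
    rw [map_zero, sub_zero] at h0
    rw [ContinuousLinearMap.smul_apply, real_inner_smul_left]
    exact mul_nonneg hε h0
  have happrox : ∀ ε : ℝ, 0 ≤ ε → ‖ε • B‖ ≤ 1 / 2 → ∀ w ∈ K,
      Ring.inverse (1 - ε • B) w ∈ K := by
    intro ε hε hnorm w hw
    have hunit : IsUnit ((1 : H →L[ℝ] H) - ε • B) :=
      ⟨Units.oneSub _ (lt_of_le_of_lt hnorm (by norm_num)), rfl⟩
    refine Stmt17Aux.resolvent hK (ε • B) (hq ε hε) hnorm hw ?_
    have hmul := Ring.mul_inverse_cancel _ hunit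
    calc Ring.inverse (1 - ε • B) w - (ε • B) (Ring.inverse (1 - ε • B) w)
        = (((1 : H →L[ℝ] H) - ε • B) * Ring.inverse (1 - ε • B)) w := by
          rw [ContinuousLinearMap.mul_apply, ContinuousLinearMap.sub_apply,
            ContinuousLinearMap.one_apply]
      _ = w := by rw [hmul]; exact ContinuousLinearMap.one_apply w
  rw [Stmt17Aux.mem_iff hK]
  intro y hy
  set c := s * ‖B‖ with hc
  have hsmall : ∀ᶠ m : ℕ in atTop, ‖(s / m) • B‖ ≤ 1 / 2 ∧ 1 ≤ m := by
    have htends : Tendsto (fun m : ℕ => c / m) atTop (𝓝 0) :=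
      tendsto_const_div_atTop_nhds_zero_nat c
    filter_upwards [htends.eventually (eventually_le_nhds one_half_pos),
      eventually_ge_atTop 1] with m h1 h2
    refine ⟨?_, h2⟩
    have hns := norm_smul (α := ℝ) (s / (m:ℝ)) B
    rw [hns, Real.norm_eq_abs, abs_of_nonneg (div_nonneg hs (Nat.cast_nonneg m))]
    calc s / m * ‖B‖ = c / m := by rw [hc]; ring
      _ ≤ 1 / 2 := h1
  have hPK : ∀ᶠ m : ℕ in atTop,
      0 ≤ ⟪((Ring.inverse (1 - (s / m) • B)) ^ m) x, y⟫ := by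
    filter_upwards [hsmall] with m hm
    have hd : 0 ≤ s / m := div_nonneg hs (Nat.cast_nonneg m)
    have hmem : ∀ j : ℕ, ((Ring.inverse (1 - (s / m) • B)) ^ j) x ∈ K := by
      intro j
      induction j with
      | zero => simpa using hx
      | succ j ih =>
        rw [pow_succ', ContinuousLinearMap.mul_apply]
        exact happrox _ hd hm.1 _ ih
    exact (Stmt17Aux.mem_iff hK).1 (hmem m) y hy
  have hconv : Tendsto (fun m : ℕ => (Ring.inverse (1 - (s / m) • B)) ^ m) atTop
      (𝓝 (exp (s • B))) := by
    rw [tendsto_iff_norm_sub_tendsto_zero]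
    apply squeeze_zero' (Eventually.of_forall fun m => norm_nonneg _)
    · filter_upwards [hsmall] with m hm
      exact approx_est B hs hm.1 hm.2
    · exact tendsto_const_div_atTop_nhds_zero_nat _
  have hcont : Continuous fun T : H →L[ℝ] H => ⟪T x, y⟫ :=
    (continuous_id.clm_apply continuous_const).inner continuous_const
  have hlim : Tendsto (fun m : ℕ => ⟪((Ring.inverse (1 - (s / m) • B)) ^ m) x, y⟫) atTop
      (𝓝 ⟪exp (s • B) x, y⟫) := (hcont.tendsto _).comp hconv
  exact ge_of_tendsto hlim hPK

end Stmt17Op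

/-- If `B̃` is a bounded linear operator which is quasi-monotone with
respect to the self-dual cone `K` and `b̃ ∈ K`, then the solution
`x_t = e^{tB̃}x + ∫₀ᵗ e^{(t−s)B̃}b̃ ds` of the affine ODE `dx_t = (b̃ + B̃x_t)dt`, `x₀ = x ∈ K`,
stays in `K` for all `t ≥ 0`. -/
theorem stmt_17 {H : Type*} [NormedAddCommGroup H] [InnerProductSpace ℝ H] [CompleteSpace H]
    (K : Set H) (hK : IsSelfDualCone K)
    (Bt : H →L[ℝ] H)
    (hquasi : ∀ v₁ v₂ : H, v₂ - v₁ ∈ K → ∀ u ∈ K, ⟪v₂ - v₁, u⟫ = 0 →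
      0 ≤ ⟪Bt v₂ - Bt v₁, u⟫)
    (bt : H) (hbt : bt ∈ K) (x : H) (hx : x ∈ K) (t : ℝ) (ht : 0 ≤ t) :
    NormedSpace.exp (t • Bt) x + (∫ s in (0 : ℝ)..t, NormedSpace.exp ((t - s) • Bt) bt) ∈ K := by
  have hcontf : Continuous fun s : ℝ => NormedSpace.exp ((t - s) • Bt) bt := by
    let +nondep : NormedAlgebra ℚ (H →L[ℝ] H) := .restrictScalars ℚ ℝ _
    exact (NormedSpace.exp_continuous.comp
      ((continuous_const.sub continuous_id).smul continuous_const)).clm_apply continuous_const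
  have hInt : IntervalIntegrable (fun s : ℝ => NormedSpace.exp ((t - s) • Bt) bt)
      MeasureTheory.volume 0 t := hcontf.intervalIntegrable 0 t
  rw [Stmt17Aux.mem_iff hK]
  intro y hy
  rw [inner_add_left]
  apply add_nonneg
  · exact (Stmt17Aux.mem_iff hK).1 (Stmt17Op.exp_mem hK Bt hquasi ht hx) y hy
  · have hcomm : ⟪(∫ s in (0 : ℝ)..t, NormedSpace.exp ((t - s) • Bt) bt), y⟫
        = ∫ s in (0 : ℝ)..t, ⟪NormedSpace.exp ((t - s) • Bt) bt, y⟫ := by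
      rw [real_inner_comm]
      have h := (innerSL ℝ y).intervalIntegral_comp_comm hInt
      simp only [innerSL_apply_apply] at h
      rw [← h]
      apply intervalIntegral.integral_congr
      intro u _
      exact real_inner_comm _ _
    rw [hcomm]
    apply intervalIntegral.integral_nonneg ht
    intro u hu
    exact (Stmt17Aux.mem_iff hK).1
      (Stmt17Op.exp_mem hK Bt hquasi (by linarith [hu.2]) hbt) y hy
end

section
/- Let H be a separable real Hilbert space and K ⊆ H a self-dual cone with K − K = H. Equip K with the topology induced by the weak topology of H, and set ρ(x) = 1 + ‖x‖². Then for every bounded weakly continuous function f : K → ℝ and every ε > 0 there exists a function g in the linear span of {x ↦ e^{−⟨x,u⟩} : u ∈ K} such that sup_{x ∈ K} |f(x) − g(x)| / ρ(x) < ε. -/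
open scoped RealInnerProductSpace Pointwise BoundedContinuousFunction

/-- The weak topology on a real inner product space: the topology induced by the maps
`x ↦ ⟪x, y⟫` for all `y` (equivalently, by all continuous linear functionals). -/
def weakTopology (H : Type*) [NormedAddCommGroup H] [InnerProductSpace ℝ H] :
    TopologicalSpace H :=
  TopologicalSpace.induced (fun x : H => fun y : H => ⟪x, y⟫) Pi.topologicalSpace

section Aux

variable {H : Type*} [NormedAddCommGroup H] [InnerProductSpace ℝ H]

set_option maxHeartbeats 1000000 in
/-- A weakly closed bounded positivity set is weakly compact. -/
lemma selfdual_weak_compact [CompleteSpace H] (K : Set H) (hK : IsSelfDualCone K)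
    (R : ℝ) (hR : 0 ≤ R) :
    @IsCompact H (weakTopology H) (K ∩ Metric.closedBall 0 R) := by
  set Ψ : H → (H → ℝ) := fun x y => ⟪x, y⟫ with hΨdef
  suffices himg : IsCompact (Ψ '' (K ∩ Metric.closedBall 0 R)) by
    letI tw : TopologicalSpace H := weakTopology H
    have hind : Topology.IsInducing Ψ := ⟨rfl⟩
    exact hind.isCompact_iff.mpr himg
  have hKpos : ∀ x ∈ K, ∀ y ∈ K, 0 ≤ ⟪x, y⟫ := by
    intro x hx
    rw [hK] at hx
    exact hx
  have hBeq : Ψ '' (K ∩ Metric.closedBall 0 R) = {φ : H → ℝ |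
      (∀ y z, φ (y + z) = φ y + φ z) ∧
      (∀ (c : ℝ) (y : H), φ (c • y) = c * φ y) ∧ (∀ y, |φ y| ≤ R * ‖y‖) ∧
      ∀ y ∈ K, 0 ≤ φ y} := by
    ext φ
    constructor
    · rintro ⟨x, ⟨hxK, hxB⟩, rfl⟩
      have hxn : ‖x‖ ≤ R := by
        rwa [Metric.mem_closedBall, dist_zero_right] at hxB
      refine ⟨fun y z => inner_add_right x y z, fun c y => real_inner_smul_right x y c,
        fun y => ?_, fun y hy => hKpos x hxK y hy⟩
      calc |⟪x, y⟫| ≤ ‖x‖ * ‖y‖ := abs_real_inner_le_norm x y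
      _ ≤ R * ‖y‖ := by
          have := norm_nonneg y
          nlinarith
    · rintro ⟨hadd, hsmul, hbound, hpos⟩
      set ℓ : H →ₗ[ℝ] ℝ :=
        { toFun := φ
          map_add' := hadd
          map_smul' := fun c y => by simpa using hsmul c y } with hℓdef
      set ℓc : H →L[ℝ] ℝ := ℓ.mkContinuous R (fun y => by
        rw [Real.norm_eq_abs]; exact hbound y) with hℓcdef
      set x : H := (InnerProductSpace.toDual ℝ H).symm ℓc with hxdef
      have hx : ∀ y : H, ⟪x, y⟫ = φ y := fun y =>
        InnerProductSpace.toDual_symm_apply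
      have hxK : x ∈ K := by
        rw [hK]
        intro y hy
        rw [hx y]
        exact hpos y hy
      have hxn : ‖x‖ ≤ R := by
        rcases eq_or_ne x 0 with h0 | h0
        · rw [h0]; simpa using hR
        · have h1 : ‖x‖ * ‖x‖ ≤ R * ‖x‖ := by
            calc ‖x‖ * ‖x‖ = ⟪x, x⟫ := (real_inner_self_eq_norm_mul_norm x).symm
            _ = φ x := hx x
            _ ≤ |φ x| := le_abs_self _
            _ ≤ R * ‖x‖ := hbound x
          have hxpos : 0 < ‖x‖ := norm_pos_iff.mpr h0
          exact le_of_mul_le_mul_right h1 hxpos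
      exact ⟨x, ⟨hxK, by rwa [Metric.mem_closedBall, dist_zero_right]⟩, funext hx⟩
  rw [hBeq]
  have hclosed : IsClosed {φ : H → ℝ | (∀ y z, φ (y + z) = φ y + φ z) ∧
      (∀ (c : ℝ) (y : H), φ (c • y) = c * φ y) ∧ (∀ y, |φ y| ≤ R * ‖y‖) ∧
      ∀ y ∈ K, 0 ≤ φ y} := by
    have heq : {φ : H → ℝ | (∀ y z, φ (y + z) = φ y + φ z) ∧
        (∀ (c : ℝ) (y : H), φ (c • y) = c * φ y) ∧ (∀ y, |φ y| ≤ R * ‖y‖) ∧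
        ∀ y ∈ K, 0 ≤ φ y} =
        (⋂ (y : H) (z : H), {φ : H → ℝ | φ (y + z) = φ y + φ z}) ∩
        ((⋂ (c : ℝ) (y : H), {φ : H → ℝ | φ (c • y) = c * φ y}) ∩
        ((⋂ (y : H), {φ : H → ℝ | |φ y| ≤ R * ‖y‖}) ∩
        (⋂ (y : H) (_ : y ∈ K), {φ : H → ℝ | 0 ≤ φ y}))) := by
      ext φ
      simp only [Set.mem_setOf_eq, Set.mem_inter_iff, Set.mem_iInter]
    rw [heq]
    refine (isClosed_iInter fun y => isClosed_iInter fun z =>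
        isClosed_eq (continuous_apply (A := fun _ : H => ℝ) _)
          (((continuous_apply (A := fun _ : H => ℝ) y)).add
            (continuous_apply (A := fun _ : H => ℝ) z))).inter
      (((isClosed_iInter fun c => isClosed_iInter fun y =>
        isClosed_eq (continuous_apply (A := fun _ : H => ℝ) _)
          (continuous_const.mul (continuous_apply (A := fun _ : H => ℝ) y)))).inter
      ((isClosed_iInter fun y =>
        isClosed_le (continuous_apply y).abs continuous_const).inter
      (isClosed_iInter fun y => isClosed_iInter fun _ =>
        isClosed_le continuous_const (continuous_apply y))))
  refine IsCompact.of_isClosed_subset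
    (isCompact_univ_pi fun y => isCompact_Icc (a := -(R * ‖y‖)) (b := R * ‖y‖)) hclosed ?_
  rintro φ ⟨-, -, hbound, -⟩
  intro y _
  exact abs_le.mp (hbound y)

end Aux

/-- Density of the linear span of the Fourier basis elements
`x ↦ e^{−⟨x,u⟩}`, `u ∈ K`, in the bounded weakly continuous functions on `K`, with respect
to the weighted norm `‖f‖_ρ = sup_{x∈K} |f(x)|/(1+‖x‖²)`. -/
theorem stmt_19 {H : Type*} [NormedAddCommGroup H] [InnerProductSpace ℝ H] [CompleteSpace H]
    [TopologicalSpace.SeparableSpace H]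
    (K : Set H) (hK : IsSelfDualCone K) (hKgen : ∀ z : H, ∃ x ∈ K, ∃ y ∈ K, z = x - y)
    (f : H → ℝ) (hfb : ∃ C : ℝ, ∀ x ∈ K, |f x| ≤ C)
    (hfc : @ContinuousOn H ℝ (weakTopology H) _ f K)
    (ε : ℝ) (hε : 0 < ε) :
    ∃ g ∈ Submodule.span ℝ {h : H → ℝ | ∃ u ∈ K, h = fun x : H => Real.exp (-⟪x, u⟫)},
      ∃ δ : ℝ, δ < ε ∧ ∀ x ∈ K, |f x - g x| ≤ δ * (1 + ‖x‖ ^ 2) := by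
  classical
  obtain ⟨C₀, hC₀⟩ := hfb
  set C : ℝ := max C₀ 0 with hCdef
  have hC0 : 0 ≤ C := le_max_right _ _
  have hfC : ∀ x ∈ K, |f x| ≤ C := fun x hx => (hC₀ x hx).trans (le_max_left _ _)
  have hKpos : ∀ x ∈ K, ∀ y ∈ K, 0 ≤ ⟪x, y⟫ := by
    intro x hx
    rw [hK] at hx
    exact hx
  have hK0 : (0 : H) ∈ K := by
    rw [hK]
    intro y hy
    simp
  have hKadd : ∀ x ∈ K, ∀ y ∈ K, x + y ∈ K := by
    intro x hx y hy
    rw [hK] at hx hy ⊢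
    intro z hz
    rw [inner_add_left]
    exact add_nonneg (hx z hz) (hy z hz)
  have hsep' : ∀ x y : H, (∀ u ∈ K, ⟪x, u⟫ = ⟪y, u⟫) → x = y := by
    intro x y h
    have hz : ∀ z : H, ⟪x - y, z⟫ = 0 := by
      intro z
      obtain ⟨a, ha, b, hb, rfl⟩ := hKgen z
      rw [inner_sub_right, inner_sub_left, inner_sub_left, h a ha, h b hb]
      ring
    have h2 := hz (x - y)
    rw [inner_self_eq_zero, sub_eq_zero] at h2
    exact h2
  set δ : ℝ := ε / 2 with hδdef
  have hδpos : 0 < δ := by positivity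
  set R : ℝ := Real.sqrt ((2 * C + δ) / δ) with hRdef
  have hRnn : 0 ≤ R := Real.sqrt_nonneg _
  have hRsq : R ^ 2 = (2 * C + δ) / δ := Real.sq_sqrt (by positivity)
  have hδR : δ * R ^ 2 = 2 * C + δ := by
    rw [hRsq]
    field_simp
  -- the span of the exponentials is closed under multiplication
  set Sexp : Set (H → ℝ) :=
    {h : H → ℝ | ∃ u ∈ K, h = fun x : H => Real.exp (-⟪x, u⟫)} with hSdef
  have hmulS : ∀ g₁ ∈ Submodule.span ℝ Sexp, ∀ g₂ ∈ Submodule.span ℝ Sexp,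
      g₁ * g₂ ∈ Submodule.span ℝ Sexp := by
    intro g₁ h₁ g₂ h₂
    have hmem := Submodule.mul_mem_mul h₁ h₂
    rw [Submodule.span_mul_span] at hmem
    have hSS : Sexp * Sexp ⊆ Sexp := by
      rintro w ⟨a, ha, b, hb, rfl⟩
      obtain ⟨u, hu, rfl⟩ := ha
      obtain ⟨v, hv, rfl⟩ := hb
      refine ⟨u + v, hKadd u hu v hv, ?_⟩
      funext x
      simp [Pi.mul_apply, inner_add_right, neg_add, Real.exp_add, mul_comm]
    exact Submodule.span_mono hSS hmem
  -- set up the weak topology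
  letI tw : TopologicalSpace H := weakTopology H
  set B : Set H := K ∩ Metric.closedBall 0 R with hBdef
  have hBcomp : IsCompact B := selfdual_weak_compact K hK R hRnn
  haveI : CompactSpace ↥B := isCompact_iff_compactSpace.mp hBcomp
  have hΨind : Topology.IsInducing (fun (x : H) (y : H) => ⟪x, y⟫) := ⟨rfl⟩
  have h01 : (0 : ℝ) ≤ 1 := zero_le_one
  set Φ : H → (↥K → ↥(Set.Icc (0:ℝ) 1)) :=
    fun x u => Set.projIcc 0 1 h01 (Real.exp (-⟪x, (u : H)⟫)) with hΦdef
  have hΦval : ∀ x ∈ K, ∀ u : ↥K, ((Φ x u : ℝ)) = Real.exp (-⟪x, (u : H)⟫) := by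
    intro x hx u
    have hmem : Real.exp (-⟪x, (u : H)⟫) ∈ Set.Icc (0:ℝ) 1 :=
      ⟨(Real.exp_pos _).le, Real.exp_le_one_iff.mpr (neg_nonpos.mpr (hKpos x hx u u.2))⟩
    simp only [hΦdef, Set.projIcc_of_mem h01 hmem]
  have hΦcont : Continuous Φ := by
    refine continuous_pi fun u => ?_
    have h1 : Continuous fun x : H => ⟪x, (u : H)⟫ :=
      (continuous_apply (A := fun _ : H => ℝ) (u : H)).comp hΨind.continuous
    exact continuous_projIcc.comp (Real.continuous_exp.comp h1.neg)
  set e : ↥B → (↥K → ↥(Set.Icc (0:ℝ) 1)) := fun b => Φ (b : H) with hedef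
  have he_inj : Function.Injective e := by
    intro b b' hbb'
    have h1 : ∀ u ∈ K, ⟪(b : H), u⟫ = ⟪(b' : H), u⟫ := by
      intro u hu
      have h2 := congrArg Subtype.val (congrFun hbb' ⟨u, hu⟩)
      rw [hedef] at h2
      simp only at h2
      rw [hΦval _ b.2.1 ⟨u, hu⟩, hΦval _ b'.2.1 ⟨u, hu⟩] at h2
      have h3 := Real.exp_injective h2
      linarith
    exact Subtype.ext (hsep' _ _ h1)
  have hce : Topology.IsClosedEmbedding e :=
    (hΦcont.comp continuous_subtype_val).isClosedEmbedding he_inj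
  -- f restricted to B as a bounded continuous function
  have hfcK : ContinuousOn f K := hfc
  have hfcB : ContinuousOn f B := hfcK.mono Set.inter_subset_left
  set F₀ : BoundedContinuousFunction ↥B ℝ := BoundedContinuousFunction.mkOfCompact ⟨_, hfcB.restrict⟩ with hF₀def
  have hF₀norm : ‖F₀‖ ≤ C := by
    refine (BoundedContinuousFunction.norm_le hC0).mpr fun b => ?_
    simpa [hF₀def, Real.norm_eq_abs] using hfC (b : H) b.2.1
  obtain ⟨F, hFnorm, hFe⟩ :=
    F₀.exists_extension_norm_eq_of_isClosedEmbedding (e := e) hce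
  have hFbound : ∀ φ, |F φ| ≤ C := by
    intro φ
    have h1 := F.norm_coe_le_norm φ
    rw [hFnorm] at h1
    simpa [Real.norm_eq_abs] using h1.trans hF₀norm
  -- Stone–Weierstrass on the cube
  set coord : ↥K → C(↥K → ↥(Set.Icc (0:ℝ) 1), ℝ) := fun u =>
    ⟨fun φ => (φ u : ℝ), continuous_subtype_val.comp (continuous_apply u)⟩ with hcoorddef
  have hsepA : (Algebra.adjoin ℝ (Set.range coord)).SeparatesPoints := by
    intro φ ψ hne
    have hex : ∃ u, φ u ≠ ψ u := by
      by_contra hcon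
      push_neg at hcon
      exact hne (funext hcon)
    obtain ⟨u, hu⟩ := hex
    exact ⟨_, ⟨coord u, Algebra.subset_adjoin ⟨u, rfl⟩, rfl⟩,
      fun h => hu (Subtype.ext h)⟩
  obtain ⟨Q, hQ⟩ := ContinuousMap.exists_mem_subalgebra_near_continuousMap_of_separatesPoints
    (Algebra.adjoin ℝ (Set.range coord)) hsepA F.toContinuousMap (δ / 2) (by positivity)
  have hQnear : ∀ φ, |(Q : C(↥K → ↥(Set.Icc (0:ℝ) 1), ℝ)) φ - F φ| ≤ δ / 2 := by
    intro φ
    have h1 := ContinuousMap.norm_coe_le_norm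
      ((Q : C(↥K → ↥(Set.Icc (0:ℝ) 1), ℝ)) - F.toContinuousMap) φ
    simp only [ContinuousMap.sub_apply, Real.norm_eq_abs] at h1
    rw [BoundedContinuousFunction.coe_toContinuousMap] at h1
    exact h1.trans hQ.le
  -- elements of the adjoin are represented on K by elements of the span
  have hrep : ∀ q ∈ Algebra.adjoin ℝ (Set.range coord),
      ∃ g ∈ Submodule.span ℝ Sexp, ∀ x ∈ K, g x = q (Φ x) := by
    intro q hq
    induction hq using Algebra.adjoin_induction with
    | mem q hqmem =>
      obtain ⟨u, rfl⟩ := hqmem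
      refine ⟨fun x => Real.exp (-⟪x, (u : H)⟫),
        Submodule.subset_span ⟨(u : H), u.2, rfl⟩, ?_⟩
      intro x hx
      simp only [hcoorddef, ContinuousMap.coe_mk]
      exact (hΦval x hx u).symm
    | algebraMap r =>
      refine ⟨(fun _ => r : H → ℝ), ?_, ?_⟩
      · have h1 : (fun x : H => Real.exp (-⟪x, (0:H)⟫)) ∈ Sexp := ⟨0, hK0, rfl⟩
        have h2 : (fun _ : H => r) = r • (fun x : H => Real.exp (-⟪x, (0:H)⟫)) := by
          funext x
          simp
        rw [h2]
        exact Submodule.smul_mem _ r (Submodule.subset_span h1)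
      · intro x hx
        simp
    | add q₁ q₂ h₁ h₂ ih₁ ih₂ =>
      obtain ⟨g₁, hg₁, he₁⟩ := ih₁
      obtain ⟨g₂, hg₂, he₂⟩ := ih₂
      exact ⟨g₁ + g₂, Submodule.add_mem _ hg₁ hg₂, fun x hx => by
        simp [he₁ x hx, he₂ x hx]⟩
    | mul q₁ q₂ h₁ h₂ ih₁ ih₂ =>
      obtain ⟨g₁, hg₁, he₁⟩ := ih₁
      obtain ⟨g₂, hg₂, he₂⟩ := ih₂
      exact ⟨g₁ * g₂, hmulS _ hg₁ _ hg₂, fun x hx => by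
        simp [he₁ x hx, he₂ x hx]⟩
  obtain ⟨g, hgmem, hgeq⟩ := hrep (Q : C(↥K → ↥(Set.Icc (0:ℝ) 1), ℝ)) Q.2
  refine ⟨g, hgmem, δ, by rw [hδdef]; linarith, ?_⟩
  intro x hx
  have hx2 : (0:ℝ) ≤ ‖x‖ ^ 2 := sq_nonneg _
  have h1 : g x = (Q : C(↥K → ↥(Set.Icc (0:ℝ) 1), ℝ)) (Φ x) := hgeq x hx
  by_cases hxR : ‖x‖ ≤ R
  · have hb : x ∈ B := ⟨hx, by rwa [Metric.mem_closedBall, dist_zero_right]⟩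
    have h2 : F (Φ x) = f x := by
      have h3 := congrFun hFe (⟨x, hb⟩ : ↥B)
      simpa [hedef, hF₀def] using h3
    have h3 := hQnear (Φ x)
    rw [h1, ← h2, abs_sub_comm]
    nlinarith [h3]
  · push_neg at hxR
    have hxsq : R ^ 2 ≤ ‖x‖ ^ 2 := by nlinarith
    have h2 : |(Q : C(↥K → ↥(Set.Icc (0:ℝ) 1), ℝ)) (Φ x)| ≤ C + δ / 2 := by
      have h3 := hQnear (Φ x)
      have h4 := hFbound (Φ x)
      have h5 := abs_sub_abs_le_abs_sub
        ((Q : C(↥K → ↥(Set.Icc (0:ℝ) 1), ℝ)) (Φ x)) (F (Φ x))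
      linarith
    have h6 : |f x - g x| ≤ 2 * C + δ / 2 := by
      rw [h1]
      have h7 := abs_sub ((f x)) ((Q : C(↥K → ↥(Set.Icc (0:ℝ) 1), ℝ)) (Φ x))
      have h8 := hfC x hx
      calc |f x - (Q : C(↥K → ↥(Set.Icc (0:ℝ) 1), ℝ)) (Φ x)|
          ≤ |f x| + |(Q : C(↥K → ↥(Set.Icc (0:ℝ) 1), ℝ)) (Φ x)| := abs_sub _ _
        _ ≤ 2 * C + δ / 2 := by linarith
    have h9 : 2 * C + δ ≤ δ * (1 + ‖x‖ ^ 2) := by nlinarith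
    linarith
end
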